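/- Let A be an endomorphism of Z^n, let D = colim(Z^n, A) be the direct limit along A, and let α be the automorphism of D determined by α([v, i]) = [v, i+1]. Then there are group isomorphisms coker(1 − α) ≅ coker(1 − A) and ker(1 − α) ≅ ker(1 − A). -/

import Mathlib

open Module

/-- The direct limit of `ℤⁿ → ℤⁿ → ⋯` with all connecting maps `A`. -/
abbrev DLim {n : ℕ} (A : Module.End ℤ (Fin n → ℤ)) :=
  Module.DirectLimit (fun _ : ℕ => Fin n → ℤ) (fun i j (_ : i ≤ j) => A ^ (j - i))

section aux
variable {n : ℕ} (A : Module.End ℤ (Fin n → ℤ))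

theorem dsys : DirectedSystem (fun _ : ℕ => Fin n → ℤ)
    (fun i j (_ : i ≤ j) => ⇑(A ^ (j - i))) := by
  constructor
  · intro i x; simp
  · intro k j i hij hjk x
    show (A ^ (k - j)) ((A ^ (j - i)) x) = (A ^ (k - i)) x
    rw [← Module.End.mul_apply, ← pow_add, Nat.sub_add_sub_cancel hjk hij]

local notation "of'" => Module.DirectLimit.of ℤ ℕ (fun _ : ℕ => Fin n → ℤ)
    (fun i j (_ : i ≤ j) => A ^ (j - i))

theorem of_step (i : ℕ) (v : Fin n → ℤ) : of' (i + 1) (A v) = of' i v := by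
  have : A v = (A ^ (i + 1 - i)) v := by simp
  rw [this]
  exact Module.DirectLimit.of_f (hij := Nat.le_succ i)

theorem of_pow (i j : ℕ) (h : i ≤ j) (v : Fin n → ℤ) :
    of' j ((A ^ (j - i)) v) = of' i v :=
  Module.DirectLimit.of_f (hij := h)

theorem fixed_pow (k : ℕ) (v : Fin n → ℤ) (hv : A v = v) : (A ^ k) v = v := by
  induction k with
  | zero => simp
  | succ m ih => rw [pow_succ, Module.End.mul_apply, hv, ih]

end aux

set_option maxHeartbeats 1000000 in
/-- with `D = colim(ℤⁿ, A)` and `α` the automorphism `[v,i] ↦ [v,i+1]`,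
one has `coker(1-α) ≅ coker(1-A)` and `ker(1-α) ≅ ker(1-A)`. -/
theorem stmt_3 {n : ℕ} (A : Module.End ℤ (Fin n → ℤ))
    (α : DLim A ≃ₗ[ℤ] DLim A)
    (hα : ∀ (i : ℕ) (v : Fin n → ℤ),
      α (Module.DirectLimit.of ℤ ℕ (fun _ : ℕ => Fin n → ℤ)
            (fun i j (_ : i ≤ j) => A ^ (j - i)) i v) =
        Module.DirectLimit.of ℤ ℕ (fun _ : ℕ => Fin n → ℤ)
            (fun i j (_ : i ≤ j) => A ^ (j - i)) (i + 1) v) :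
    Nonempty
      ((DLim A ⧸ LinearMap.range
          ((LinearMap.id : DLim A →ₗ[ℤ] DLim A) - (α : DLim A →ₗ[ℤ] DLim A))) ≃ₗ[ℤ]
        ((Fin n → ℤ) ⧸ LinearMap.range (1 - A))) ∧
    Nonempty
      ((LinearMap.ker
          ((LinearMap.id : DLim A →ₗ[ℤ] DLim A) - (α : DLim A →ₗ[ℤ] DLim A))) ≃ₗ[ℤ]
        LinearMap.ker (1 - A)) := by
  haveI := dsys A
  set F := fun (i j : ℕ) (_ : i ≤ j) => A ^ (j - i) with hF
  set ofl := fun i => Module.DirectLimit.of ℤ ℕ (fun _ : ℕ => Fin n → ℤ) F i with hofl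
  set β : DLim A →ₗ[ℤ] DLim A :=
    (LinearMap.id : DLim A →ₗ[ℤ] DLim A) - (α : DLim A →ₗ[ℤ] DLim A) with hβ
  have hβof : ∀ (i : ℕ) (v : Fin n → ℤ), β (ofl i v) = ofl i v - ofl (i + 1) v := by
    intro i v
    simp [hβ, hα i v, hofl]
    exact hα i v
  have exists_of : ∀ z : DLim A, ∃ i v, ofl i v = z := fun z =>
    Module.DirectLimit.exists_of z
  have zero_exact : ∀ (i : ℕ) (v : Fin n → ℤ), ofl i v = 0 →
      ∃ k : ℕ, (A ^ k) v = 0 := by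
    intro i v h
    obtain ⟨j, hij, hj⟩ := Module.DirectLimit.of.zero_exact h
    exact ⟨j - i, hj⟩
  have of_eq : ∀ (i j : ℕ) (h : i ≤ j) (v : Fin n → ℤ),
      ofl j ((A ^ (j - i)) v) = ofl i v := fun i j h v => of_pow A i j h v
  have of_eq' : ∀ (i : ℕ) (v : Fin n → ℤ), ofl (i + 1) (A v) = ofl i v :=
    fun i v => of_step A i v
  constructor
  · -- cokernel part
    set π := (LinearMap.range β).mkQ with hπ
    set g : (Fin n → ℤ) →ₗ[ℤ] (DLim A ⧸ LinearMap.range β) := π ∘ₗ ofl 0 with hg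
    have step : ∀ (i : ℕ) (v : Fin n → ℤ), π (ofl (i + 1) v) = π (ofl i v) := by
      intro i v
      rw [eq_comm, ← sub_eq_zero, ← map_sub, ← hβof i v]
      exact (Submodule.Quotient.mk_eq_zero _).2 ⟨ofl i v, rfl⟩
    have down : ∀ (i : ℕ) (v : Fin n → ℤ), π (ofl i v) = π (ofl 0 v) := by
      intro i
      induction i with
      | zero => intro v; rfl
      | succ m ih => intro v; rw [step m v, ih v]
    have hsurj : Function.Surjective g := by
      intro z
      obtain ⟨z', rfl⟩ := Submodule.mkQ_surjective _ z
      obtain ⟨i, v, rfl⟩ := exists_of z'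
      exact ⟨v, (down i v).symm⟩
    have hker : LinearMap.ker g = LinearMap.range (1 - A) := by
      apply le_antisymm
      · intro v hv
        have hv0 : π (ofl 0 v) = 0 := hv
        rw [Submodule.mkQ_apply, Submodule.Quotient.mk_eq_zero] at hv0
        obtain ⟨x, hx⟩ := hv0
        obtain ⟨i, u, rfl⟩ := exists_of x
        have e1 : ofl i u = ofl (i + 1) (A u) := (of_eq' i u).symm
        have e2 : ofl 0 v = ofl (i + 1) ((A ^ (i + 1)) v) := by
          have := of_eq 0 (i + 1) (Nat.zero_le _) v
          simpa using this.symm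
        have h1 : ofl (i + 1) (A u - u - (A ^ (i + 1)) v) = 0 := by
          have hx' := hx
          rw [hβof i u] at hx'
          calc ofl (i + 1) (A u - u - (A ^ (i + 1)) v)
              = ofl (i + 1) (A u) - ofl (i + 1) u - ofl (i + 1) ((A ^ (i + 1)) v) := by
                rw [map_sub, map_sub]
            _ = ofl i u - ofl (i + 1) u - ofl 0 v := by rw [← e1, ← e2]
            _ = ofl 0 v - ofl 0 v := by rw [hx']
            _ = 0 := sub_self _
        obtain ⟨k, hk⟩ := zero_exact _ _ h1
        have h3 : (A ^ k) ((A ^ (i + 1)) v) = (A ^ (k + i + 1)) v := by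
          rw [← Module.End.mul_apply, ← pow_add, ← add_assoc]
        have h2 : (A ^ (k + i + 1)) v = (A ^ k) (A u) - (A ^ k) u := by
          have h0 : (A ^ k) (A u - u - (A ^ (i + 1)) v) = 0 := hk
          rw [map_sub, map_sub, sub_sub, sub_eq_zero] at h0
          rw [h0, ← h3]; abel
        have hgeom : (1 - A) * (∑ j ∈ Finset.range (k + i + 1), A ^ j)
            = 1 - A ^ (k + i + 1) := by
          have hgs := mul_geom_sum A (k + i + 1)
          have hneg : (1 - A) * (∑ j ∈ Finset.range (k + i + 1), A ^ j)
              = -((A - 1) * ∑ j ∈ Finset.range (k + i + 1), A ^ j) := by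
            rw [← neg_mul, neg_sub]
          rw [hneg, hgs, neg_sub]
        have mem1 : v - (A ^ (k + i + 1)) v ∈ LinearMap.range (1 - A) := by
          refine ⟨(∑ j ∈ Finset.range (k + i + 1), A ^ j) v, ?_⟩
          have := congrArg (fun f : Module.End ℤ (Fin n → ℤ) => f v) hgeom
          simpa [Module.End.mul_apply, LinearMap.sub_apply] using this
        have mem2 : (A ^ (k + i + 1)) v ∈ LinearMap.range (1 - A) := by
          refine ⟨-((A ^ k) u), ?_⟩
          have hcomm : A ((A ^ k) u) = (A ^ k) (A u) := by
            rw [← Module.End.mul_apply, ← pow_succ', pow_succ, Module.End.mul_apply]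
          simp only [LinearMap.sub_apply, Module.End.one_apply, map_neg]
          rw [hcomm, h2]; abel
        have := Submodule.add_mem _ mem1 mem2
        simpa using this
      · rintro _ ⟨w, rfl⟩
        show π (ofl 0 ((1 - A) w)) = 0
        rw [Submodule.mkQ_apply, Submodule.Quotient.mk_eq_zero]
        refine ⟨-(ofl 0 (A w)), ?_⟩
        rw [map_neg, hβof 0 (A w), of_eq' 0 w]
        have : ofl 0 ((1 - A) w) = ofl 0 w - ofl 0 (A w) := by
          rw [LinearMap.sub_apply, Module.End.one_apply, map_sub]
        rw [this]; abel
    exact ⟨(g.quotKerEquivOfSurjective hsurj).symm.trans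
      (Submodule.quotEquivOfEq _ _ hker)⟩
  · -- kernel part
    have hfix : ∀ w : Fin n → ℤ, w ∈ LinearMap.ker (1 - A) → A w = w := by
      intro w hw
      have : (1 - A) w = 0 := hw
      rw [LinearMap.sub_apply, Module.End.one_apply, sub_eq_zero] at this
      exact this.symm
    have hmem : ∀ w : Fin n → ℤ, (1 - A) w = 0 → ofl 0 w ∈ LinearMap.ker β := by
      intro w hw
      have hAw : A w = w := hfix w hw
      have : β (ofl 0 w) = 0 := by
        rw [hβof 0 w, ← of_eq' 0 w, hAw, sub_self]
      exact this
    set e : LinearMap.ker (1 - A) →ₗ[ℤ] LinearMap.ker β :=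
      LinearMap.codRestrict _ ((ofl 0) ∘ₗ (LinearMap.ker (1 - A)).subtype)
        (fun w => hmem w w.2) with he
    have hinj : Function.Injective e := by
      intro w₁ w₂ hw
      have h0 : ofl 0 (w₁ - w₂ : Fin n → ℤ) = 0 := by
        have : ofl 0 (w₁ : Fin n → ℤ) = ofl 0 (w₂ : Fin n → ℤ) :=
          congrArg Subtype.val hw
        rw [map_sub, this, sub_self]
      obtain ⟨k, hk⟩ := zero_exact 0 _ h0
      have hf : A ((w₁ : Fin n → ℤ) - w₂) = (w₁ : Fin n → ℤ) - w₂ := by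
        rw [map_sub, hfix _ w₁.2, hfix _ w₂.2]
      rw [fixed_pow A k _ hf] at hk
      exact Subtype.ext (sub_eq_zero.mp hk)
    have hsurj : Function.Surjective e := by
      rintro ⟨z, hz⟩
      obtain ⟨i, u, rfl⟩ := exists_of z
      have hz' : ofl (i + 1) (A u - u) = 0 := by
        have : β (ofl i u) = 0 := hz
        rw [hβof i u, ← of_eq' i u, sub_eq_zero] at this
        rw [map_sub, this, sub_self]
      obtain ⟨k, hk⟩ := zero_exact _ _ hz'
      set w := (A ^ k) u with hwdef
      have hAw : A w = w := by
        rw [map_sub] at hk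
        have : (A ^ k) (A u) = (A ^ k) u := sub_eq_zero.mp hk
        rw [hwdef, ← Module.End.mul_apply, ← pow_succ', pow_succ,
          Module.End.mul_apply, this]
      have hwker : w ∈ LinearMap.ker (1 - A) := by
        show (1 - A) w = 0
        rw [LinearMap.sub_apply, Module.End.one_apply, hAw, sub_self]
      refine ⟨⟨w, hwker⟩, ?_⟩
      apply Subtype.ext
      show ofl 0 w = ofl i u
      have s1 : ofl 0 w = ofl (i + k) w := by
        have := of_eq 0 (i + k) (Nat.zero_le _) w
        rw [Nat.sub_zero] at this
        rw [← this, fixed_pow A (i + k) w hAw]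
      have s2 : ofl i u = ofl (i + k) w := by
        have := of_eq i (i + k) (Nat.le_add_right i k) u
        rw [Nat.add_sub_cancel_left] at this
        rw [← this, hwdef]
      rw [s1, s2]
    exact ⟨(LinearEquiv.ofBijective e ⟨hinj, hsurj⟩).symm⟩
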